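/- Let S = ℚ[α]. Consider the submodule M ⊂ S⁴ of quadruples (f_x, f_y, f_z, f_t) with f_x ≡ f_y ≡ f_z ≡ f_t mod α and f_x − f_y + f_z − f_t ≡ 0 mod α². Then the intersection of M with the subspace {f_y = f_t} is isomorphic, via (f_x, f_y, f_z, f_y) ↦ (f_x, f_y, f_z), to the submodule of triples (f_x, f_y, f_z) ∈ S³ with f_x ≡ f_y ≡ f_z mod α and f_x − 2f_y + f_z ≡ 0 mod α². -/
import Mathlib


open Polynomial

namespace Stmt11

/-- Quadruple congruence conditions for the Hirzebruch surface `F_n`. -/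
def P4 (f : ℚ[X] × ℚ[X] × ℚ[X] × ℚ[X]) : Prop :=
  X ∣ f.1 - f.2.1 ∧ X ∣ f.2.1 - f.2.2.1 ∧ X ∣ f.2.2.1 - f.2.2.2 ∧
    X ^ 2 ∣ f.1 - f.2.1 + f.2.2.1 - f.2.2.2

/-- Triple congruence conditions for the weighted projective plane `P_n`. -/
def P3 (g : ℚ[X] × ℚ[X] × ℚ[X]) : Prop :=
  X ∣ g.1 - g.2.1 ∧ X ∣ g.2.1 - g.2.2 ∧ X ^ 2 ∣ g.1 - 2 * g.2.1 + g.2.2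

lemma key (fx fy fz : ℚ[X]) : P4 (fx, fy, fz, fy) ↔ P3 (fx, fy, fz) := by
  unfold P4 P3
  constructor
  · rintro ⟨h1, h2, h3, h4⟩
    exact ⟨h1, h2, by simpa [show fx - fy + fz - fy = fx - 2 * fy + fz by ring] using h4⟩
  · rintro ⟨h1, h2, h3⟩
    refine ⟨h1, h2, ?_, ?_⟩
    · rw [show fz - fy = -(fy - fz) by ring]; exact h2.neg_right
    · simpa [show fx - fy + fz - fy = fx - 2 * fy + fz by ring] using h3

/-- The intersection of the quadruple congruence module with the subspace `{f_y = f_t}`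
maps bijectively, via `(f_x, f_y, f_z, f_y) ↦ (f_x, f_y, f_z)`, onto the triple
congruence module with relation `f_x − 2 f_y + f_z ≡ 0 mod α²`. -/
theorem contraction_isomorphism :
    (∀ fx fy fz : ℚ[X], P4 (fx, fy, fz, fy) ↔ P3 (fx, fy, fz)) ∧
    Set.BijOn (fun f : ℚ[X] × ℚ[X] × ℚ[X] × ℚ[X] => (f.1, f.2.1, f.2.2.1))
      {f | P4 f ∧ f.2.1 = f.2.2.2} {g | P3 g} := by
  refine ⟨key, ?_, ?_, ?_⟩
  · rintro ⟨fx, fy, fz, ft⟩ ⟨h4, he⟩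
    simp only at he
    subst he
    exact (key fx fy fz).mp h4
  · rintro ⟨fx, fy, fz, ft⟩ ⟨_, he⟩ ⟨gx, gy, gz, gt⟩ ⟨_, he'⟩ h
    simp only [Prod.mk.injEq] at h
    simp only at he he'
    subst he he'
    simp_all
  · rintro ⟨gx, gy, gz⟩ hg
    exact ⟨(gx, gy, gz, gy), ⟨(key gx gy gz).mpr hg, rfl⟩, rfl⟩

end Stmt11
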